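/- Let C ⊆ ℝ^m be a convex cone, let x ∈ ℝ^m and y ∈ C with x ≠ y, let t > 1, and set b := x + t•(y − x). Assume b ∈ C and x + t'•(y − x) ∉ C for every t' > t (so b is the point where the line through x and y exits C beyond y). Then M(x,y) = t/(t−1) = ‖x − b‖ / ‖y − b‖. -/

import Mathlib

/-- Birkhoff coefficient `M(x,y) = inf {λ ≥ 0 : λ•y - x ∈ C}`. -/
noncomputable def Mcoef {m : ℕ} (C : Set (EuclideanSpace ℝ (Fin m)))
    (x y : EuclideanSpace ℝ (Fin m)) : ℝ :=
  sInf {l : ℝ | 0 ≤ l ∧ l • y - x ∈ C}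

/-- Birkhoff coefficient `m(x,y) = sup {λ ≥ 0 : x - λ•y ∈ C}`. -/
noncomputable def mcoef {m : ℕ} (C : Set (EuclideanSpace ℝ (Fin m)))
    (x y : EuclideanSpace ℝ (Fin m)) : ℝ :=
  sSup {l : ℝ | 0 ≤ l ∧ x - l • y ∈ C}

/-- Birkhoff's version of the Hilbert metric `d_h(x,y) = (1/2)·log(M(x,y)/m(x,y))`. -/
noncomputable def dh {m : ℕ} (C : Set (EuclideanSpace ℝ (Fin m)))
    (x y : EuclideanSpace ℝ (Fin m)) : ℝ :=
  (1 / 2) * Real.log (Mcoef C x y / mcoef C x y)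

/-- If `b = x + t•(y − x)` (with `t > 1`) is the point where the line through `x` and
`y` exits the convex cone `C` beyond `y`, then `M(x,y) = t/(t−1) = ‖x − b‖/‖y − b‖`. -/
theorem stmt2 {m : ℕ} (C : Set (EuclideanSpace ℝ (Fin m)))
    (hadd : ∀ a ∈ C, ∀ b ∈ C, a + b ∈ C)
    (hsmul : ∀ c : ℝ, 0 < c → ∀ a ∈ C, c • a ∈ C)
    (x y : EuclideanSpace ℝ (Fin m)) (hy : y ∈ C) (hxy : x ≠ y)
    (t : ℝ) (ht : 1 < t)
    (b : EuclideanSpace ℝ (Fin m)) (hbdef : b = x + t • (y - x))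
    (hb : b ∈ C)
    (hout : ∀ t' : ℝ, t < t' → x + t' • (y - x) ∉ C) :
    Mcoef C x y = t / (t - 1) ∧ t / (t - 1) = ‖x - b‖ / ‖y - b‖ := by
  have hyx : y - x ≠ 0 := sub_ne_zero.mpr (Ne.symm hxy)
  have ht1 : (0:ℝ) < t - 1 := by linarith
  have ht1' : t - 1 ≠ 0 := ne_of_gt ht1
  -- membership of t/(t-1)
  have hmem : t / (t - 1) ∈ {l : ℝ | 0 ≤ l ∧ l • y - x ∈ C} := by
    refine ⟨by positivity, ?_⟩
    have h1 : (t / (t - 1)) • y - x = (1 / (t - 1)) • b := by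
      rw [hbdef]
      match_scalars <;> field_simp <;> ring
    rw [h1]
    exact hsmul _ (by positivity) _ hb
  -- lower bound
  have hlb : ∀ l ∈ {l : ℝ | 0 ≤ l ∧ l • y - x ∈ C}, t / (t - 1) ≤ l := by
    rintro l ⟨hl0, hlC⟩
    by_contra hlt
    push_neg at hlt
    rcases le_or_gt l 1 with hl1 | hl1
    · -- l ≤ 1 : y - x ∈ C, so the ray keeps going
      have hyxC : y - x ∈ C := by
        rcases lt_or_eq_of_le hl1 with h | h
        · have : (1 - l) • y ∈ C := hsmul _ (by linarith) _ hy
          have := hadd _ hlC _ this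
          have heq : l • y - x + (1 - l) • y = y - x := by module
          rwa [heq] at this
        · rw [h, one_smul] at hlC; exact hlC
      have : x + (t + 1) • (y - x) ∈ C := by
        have := hadd _ hb _ hyxC
        have heq : b + (y - x) = x + (t + 1) • (y - x) := by
          rw [hbdef]; module
        rwa [heq] at this
      exact hout (t + 1) (by linarith) this
    · -- 1 < l
      have hl1' : (0:ℝ) < l - 1 := by linarith
      have hs : t < l / (l - 1) := by
        have hlt' : l * (t - 1) < t := (lt_div_iff₀ ht1).mp hlt
        rw [lt_div_iff₀ hl1']
        nlinarith
      have : x + (l / (l - 1)) • (y - x) ∈ C := by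
        have hC := hsmul (1 / (l - 1)) (by positivity) _ hlC
        have heq : (1 / (l - 1)) • (l • y - x) = x + (l / (l - 1)) • (y - x) := by
          match_scalars <;> field_simp <;> ring
        rwa [heq] at hC
      exact hout _ hs this
  constructor
  · refine le_antisymm (csInf_le ⟨0, fun l hl => hl.1⟩ hmem) (le_csInf ⟨_, hmem⟩ hlb)
  · have h1 : x - b = (-t) • (y - x) := by rw [hbdef]; module
    have h2 : y - b = (1 - t) • (y - x) := by rw [hbdef]; module
    rw [h1, h2, norm_smul, norm_smul]
    have hn : ‖y - x‖ ≠ 0 := norm_ne_zero_iff.mpr hyx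
    rw [Real.norm_eq_abs, Real.norm_eq_abs, abs_neg,
      abs_of_pos (by linarith : (0:ℝ) < t), abs_of_neg (by linarith : 1 - t < 0)]
    rw [mul_div_mul_right _ _ hn, neg_sub]
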